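/- Let V be a real reflexive Banach space, T > 0, and let A, A′ : [0,T] → L(V;V′) be bounded maps into the continuous linear operators from V to its dual, such that for every v₁, v₂ ∈ V the function t ↦ ⟨A(t)v₁, v₂⟩_{V′,V} is absolutely continuous on [0,T] with derivative ⟨A′(t)v₁, v₂⟩_{V′,V} for a.e. t. Assume A(t) is symmetric for each t, i.e. ⟨A(t)v₁,v₂⟩ = ⟨A(t)v₂,v₁⟩. Let u : [0,T] → V be absolutely continuous with Bochner-integrable derivative u′ ∈ L¹(0,T;V) (i.e. u ∈ W^{1,1}(0,T;V)). Then the function g(t) = ⟨A(t)u(t), u(t)⟩_{V′,V} is absolutely continuous on [0,T] with derivative g′(t) = ⟨A′(t)u(t), u(t)⟩_{V′,V} + 2⟨A(t)u(t), u′(t)⟩_{V′,V} for almost every t; equivalently, for all 0 ≤ t₀ < t₁ ≤ T, ⟨A(t₁)u(t₁),u(t₁)⟩ − ⟨A(t₀)u(t₀),u(t₀)⟩ = ∫_{t₀}^{t₁} ⟨A′(t)u(t),u(t)⟩ + 2⟨A(t)u(t),u′(t)⟩ dt. -/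

import Mathlib

noncomputable section
set_option maxHeartbeats 1000000

open MeasureTheory

lemma aesm_clm_apply {α : Type*} [MeasurableSpace α] {μ : Measure α}
    {V W : Type*} [NormedAddCommGroup V] [NormedSpace ℝ V]
    [NormedAddCommGroup W] [NormedSpace ℝ W]
    (B : α → V →L[ℝ] W) (f : α → V)
    (hB : ∀ v : V, AEStronglyMeasurable (fun t => B t v) μ)
    (hf : AEStronglyMeasurable f μ) :
    AEStronglyMeasurable (fun t => B t (f t)) μ := by
  rcases hf with ⟨g, hg, hfg⟩
  have hsimple : ∀ s : SimpleFunc α V, AEStronglyMeasurable (fun t => B t (s t)) μ := by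
    intro s
    induction s using SimpleFunc.induction with
    | @const c st hs =>
        have heq : (fun t => B t ((SimpleFunc.piecewise st hs (SimpleFunc.const α c)
            (SimpleFunc.const α 0)) t)) = fun t => Set.indicator st (fun t' => B t' c) t := by
          ext t
          by_cases h : t ∈ st <;>
            simp [SimpleFunc.piecewise_apply, Set.indicator_apply, h]
        rw [heq]
        exact (hB c).indicator hs
    | @add f₁ g₁ _ ihf ihg =>
        have heq : (fun t => B t ((f₁ + g₁) t)) = fun t => B t (f₁ t) + B t (g₁ t) := by
          ext t; simp
        rw [heq]; exact ihf.add ihg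
  have key : AEStronglyMeasurable (fun t => B t (g t)) μ := by
    refine aestronglyMeasurable_of_tendsto_ae Filter.atTop
      (f := fun n t => B t (hg.approx n t)) (fun n => hsimple _) ?_
    filter_upwards with t
    exact ((B t).continuous.tendsto _).comp (hg.tendsto_approx t)
  exact key.congr (hfg.mono fun t ht => by simp [ht])

lemma inner_eq {a b : ℝ} (f : ℝ → ℝ → ℝ) {t : ℝ} (ht : t ∈ Set.Ioc a b) :
    (∫ s in a..t, f s t) =
      ∫ s in Set.Ioc a b, Set.indicator {p : ℝ × ℝ | p.1 ≤ p.2} (fun p => f p.1 p.2) (s, t) := by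
  rw [intervalIntegral.integral_of_le ht.1.le]
  have h1 : (fun s => Set.indicator {p : ℝ × ℝ | p.1 ≤ p.2} (fun p => f p.1 p.2) (s, t))
      = Set.indicator (Set.Iic t) (fun s => f s t) := by
    ext s
    by_cases h : s ≤ t <;> simp [Set.indicator_apply, h]
  rw [h1, MeasureTheory.integral_indicator measurableSet_Iic,
    Measure.restrict_restrict measurableSet_Iic]
  congr 1
  rw [Set.Iic_inter_Ioc_of_le ht.2]

lemma inner_eq' {a b : ℝ} (f : ℝ → ℝ → ℝ) {s : ℝ} (hs : s ∈ Set.Ioc a b) :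
    (∫ t in s..b, f s t) =
      ∫ t in Set.Ioc a b, Set.indicator {p : ℝ × ℝ | p.1 ≤ p.2} (fun p => f p.1 p.2) (s, t) := by
  rw [intervalIntegral.integral_of_le hs.2]
  have h1 : (fun t => Set.indicator {p : ℝ × ℝ | p.1 ≤ p.2} (fun p => f p.1 p.2) (s, t))
      = Set.indicator (Set.Ici s) (fun t => f s t) := by
    ext t
    by_cases h : s ≤ t <;> simp [Set.indicator_apply, h]
  rw [h1, MeasureTheory.integral_indicator measurableSet_Ici,
    Measure.restrict_restrict measurableSet_Ici]
  have h2 : Set.Ici s ∩ Set.Ioc a b = Set.Icc s b := by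
    ext x
    simp only [Set.mem_inter_iff, Set.mem_Ici, Set.mem_Ioc, Set.mem_Icc]
    constructor
    · rintro ⟨h1, _, h3⟩; exact ⟨h1, h3⟩
    · rintro ⟨h1, h2⟩; exact ⟨h1, lt_of_lt_of_le hs.1 h1, h2⟩
  rw [h2, MeasureTheory.integral_Icc_eq_integral_Ioc]

lemma tri_swap {a b : ℝ} (hab : a ≤ b) (f : ℝ → ℝ → ℝ)
    (hf : Integrable (fun p : ℝ × ℝ => f p.1 p.2)
      ((volume.restrict (Set.Ioc a b)).prod (volume.restrict (Set.Ioc a b)))) :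
    (∫ t in a..b, (∫ s in a..t, f s t)) = ∫ s in a..b, (∫ t in s..b, f s t) := by
  set F : ℝ × ℝ → ℝ := Set.indicator {p : ℝ × ℝ | p.1 ≤ p.2} (fun p => f p.1 p.2) with hF
  have hmeas : MeasurableSet {p : ℝ × ℝ | p.1 ≤ p.2} :=
    measurableSet_le measurable_fst measurable_snd
  have hFint : Integrable F
      ((volume.restrict (Set.Ioc a b)).prod (volume.restrict (Set.Ioc a b))) :=
    hf.indicator hmeas
  rw [intervalIntegral.integral_of_le hab, intervalIntegral.integral_of_le hab]
  calc (∫ t in Set.Ioc a b, (∫ s in a..t, f s t))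
      = ∫ t in Set.Ioc a b, ∫ s in Set.Ioc a b, F (s, t) := by
        refine setIntegral_congr_fun measurableSet_Ioc (fun t ht => ?_)
        exact inner_eq f ht
    _ = ∫ s in Set.Ioc a b, ∫ t in Set.Ioc a b, F (s, t) := by
        refine MeasureTheory.integral_integral_swap (f := fun t s => F (s, t)) ?_
        exact hFint.swap
    _ = ∫ s in Set.Ioc a b, (∫ t in s..b, f s t) := by
        refine setIntegral_congr_fun measurableSet_Ioc (fun s hs => ?_)
        exact (inner_eq' f hs).symm

lemma tri_int {a b : ℝ} (hab : a ≤ b) (f : ℝ → ℝ → ℝ)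
    (hf : Integrable (fun p : ℝ × ℝ => f p.1 p.2)
      ((volume.restrict (Set.Ioc a b)).prod (volume.restrict (Set.Ioc a b)))) :
    IntervalIntegrable (fun t => ∫ s in a..t, f s t) volume a b := by
  set F : ℝ × ℝ → ℝ := Set.indicator {p : ℝ × ℝ | p.1 ≤ p.2} (fun p => f p.1 p.2) with hF
  have hmeas : MeasurableSet {p : ℝ × ℝ | p.1 ≤ p.2} :=
    measurableSet_le measurable_fst measurable_snd
  have hFint : Integrable F
      ((volume.restrict (Set.Ioc a b)).prod (volume.restrict (Set.Ioc a b))) :=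
    hf.indicator hmeas
  have hmarg : Integrable (fun t => ∫ s in Set.Ioc a b, F (s, t))
      (volume.restrict (Set.Ioc a b)) := (hFint.swap).integral_prod_left
  rw [intervalIntegrable_iff, Set.uIoc_of_le hab]
  refine hmarg.congr ?_
  filter_upwards [ae_restrict_mem measurableSet_Ioc] with t ht
  exact (inner_eq f ht).symm


lemma aesm_bilin_apply {α : Type*} [MeasurableSpace α] {μ : Measure α}
    {V : Type*} [NormedAddCommGroup V] [NormedSpace ℝ V]
    (B : α → V →L[ℝ] V →L[ℝ] ℝ) (f g : α → V)
    (hB : ∀ v w : V, AEStronglyMeasurable (fun t => B t v w) μ)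
    (hf : AEStronglyMeasurable f μ) (hg : AEStronglyMeasurable g μ) :
    AEStronglyMeasurable (fun t => B t (f t) (g t)) μ := by
  have h1 : ∀ w : V, AEStronglyMeasurable (fun t => B t (f t) w) μ := by
    intro w
    have h2 := aesm_clm_apply (B := fun t => (B t).flip w) f
      (fun v => by simpa using hB v w) hf
    simpa using h2
  exact aesm_clm_apply (B := fun t => B t (f t)) g h1 hg

/-- **Absolute continuity of `t ↦ ⟨A(t)u(t), u(t)⟩`** (Lemma `lem:abscontofAuu`).
Let `V` be a real reflexive Banach space (reflexivity is expressed by surjectivity of the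
canonical embedding into the double dual), `T > 0`, and let `A, A' : [0,T] → L(V;V')` be
bounded, such that for all `v₁, v₂ ∈ V` the function `t ↦ ⟨A(t)v₁,v₂⟩` is absolutely
continuous with derivative `⟨A'(t)v₁,v₂⟩` (expressed via the fundamental theorem of
calculus with integrable integrand). Assume each `A(t)` is symmetric, and let
`u ∈ W^{1,1}(0,T;V)` with derivative `u'`. Then `g(t) = ⟨A(t)u(t),u(t)⟩` is absolutely
continuous with derivative `⟨A'u,u⟩ + 2⟨Au,u'⟩`, i.e. for all `0 ≤ t₀ < t₁ ≤ T`: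
`⟨A(t₁)u(t₁),u(t₁)⟩ − ⟨A(t₀)u(t₀),u(t₀)⟩ = ∫_{t₀}^{t₁} ⟨A'u,u⟩ + 2⟨Au,u'⟩ dt`. -/
theorem abs_continuity_of_Auu
    (V : Type*) [NormedAddCommGroup V] [NormedSpace ℝ V] [CompleteSpace V]
    (hreflexive : Function.Surjective (NormedSpace.inclusionInDoubleDual ℝ V))
    (T : ℝ) (hT : 0 < T)
    (A A' : ℝ → V →L[ℝ] V →L[ℝ] ℝ)
    (CA CA' : ℝ)
    (hAbdd : ∀ t ∈ Set.Icc (0 : ℝ) T, ‖A t‖ ≤ CA)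
    (hA'bdd : ∀ t ∈ Set.Icc (0 : ℝ) T, ‖A' t‖ ≤ CA')
    (hA'int : ∀ v₁ v₂ : V, IntervalIntegrable (fun t => A' t v₁ v₂) volume 0 T)
    (hAac : ∀ v₁ v₂ : V, ∀ t ∈ Set.Icc (0 : ℝ) T,
      A t v₁ v₂ = A 0 v₁ v₂ + ∫ s in (0 : ℝ)..t, A' s v₁ v₂)
    (hAsymm : ∀ t ∈ Set.Icc (0 : ℝ) T, ∀ v₁ v₂ : V, A t v₁ v₂ = A t v₂ v₁)
    (u u' : ℝ → V)
    (hu'L1 : IntervalIntegrable u' volume 0 T)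
    (huac : ∀ t ∈ Set.Icc (0 : ℝ) T, u t = u 0 + ∫ s in (0 : ℝ)..t, u' s) :
    ∀ t₀ t₁ : ℝ, 0 ≤ t₀ → t₀ < t₁ → t₁ ≤ T →
      A t₁ (u t₁) (u t₁) - A t₀ (u t₀) (u t₀)
        = ∫ t in t₀..t₁, (A' t (u t) (u t) + 2 * A t (u t) (u' t)) := by
  intro a b ha hab hbT
  have h0T : (0:ℝ) ∈ Set.Icc (0:ℝ) T := ⟨le_refl _, hT.le⟩
  have haT : a ∈ Set.Icc (0:ℝ) T := ⟨ha, hab.le.trans hbT⟩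
  have hbT' : b ∈ Set.Icc (0:ℝ) T := ⟨ha.trans hab.le, hbT⟩
  have habl : a ≤ b := hab.le
  have hsub : Set.Icc a b ⊆ Set.Icc 0 T := Set.Icc_subset_Icc ha hbT
  have hsubO : Set.Ioc a b ⊆ Set.Icc 0 T := fun x hx => hsub ⟨hx.1.le, hx.2⟩
  have huIcc : Set.uIcc (0:ℝ) T = Set.Icc 0 T := Set.uIcc_of_le hT.le
  have hA'sub : ∀ (v w : V) (c d : ℝ), c ∈ Set.Icc (0:ℝ) T → d ∈ Set.Icc (0:ℝ) T →
      IntervalIntegrable (fun t => A' t v w) volume c d := by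
    intro v w c d hc hd
    refine (hA'int v w).mono_set ?_
    exact Set.uIcc_subset_uIcc (by rwa [huIcc]) (by rwa [huIcc])
  have hu'sub : ∀ (c d : ℝ), c ∈ Set.Icc (0:ℝ) T → d ∈ Set.Icc (0:ℝ) T →
      IntervalIntegrable u' volume c d := by
    intro c d hc hd
    refine hu'L1.mono_set ?_
    exact Set.uIcc_subset_uIcc (by rwa [huIcc]) (by rwa [huIcc])
  have pullA : ∀ (c d : ℝ), c ∈ Set.Icc (0:ℝ) T → d ∈ Set.Icc (0:ℝ) T → ∀ v w : V,
      (∫ s in c..d, A' s v w) = A d v w - A c v w := by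
    intro c d hc hd v w
    have h1 := intervalIntegral.integral_add_adjacent_intervals
      (hA'sub v w 0 c h0T hc) (hA'sub v w c d hc hd)
    have h2 := hAac v w c hc
    have h3 := hAac v w d hd
    linarith
  have pullU : ∀ (c d : ℝ), c ∈ Set.Icc (0:ℝ) T → d ∈ Set.Icc (0:ℝ) T →
      (∫ s in c..d, u' s) = u d - u c := by
    intro c d hc hd
    have h1 := intervalIntegral.integral_add_adjacent_intervals
      (hu'sub 0 c h0T hc) (hu'sub c d hc hd)
    rw [huac d hd, huac c hc, ← h1]
    abel
  have pullUL : ∀ (L : V →L[ℝ] ℝ) (c d : ℝ), c ∈ Set.Icc (0:ℝ) T → d ∈ Set.Icc (0:ℝ) T →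
      (∫ s in c..d, L (u' s)) = L (u d) - L (u c) := by
    intro L c d hc hd
    rw [L.intervalIntegral_comp_comm (hu'sub c d hc hd), pullU c d hc hd, map_sub]
  have hucont : ContinuousOn u (Set.Icc 0 T) := by
    have hint : IntegrableOn u' (Set.uIcc 0 T) volume := by
      rw [huIcc, integrableOn_Icc_iff_integrableOn_Ioc]
      exact hu'L1.1
    have hprim : ContinuousOn (fun t => u 0 + ∫ s in (0:ℝ)..t, u' s) (Set.Icc 0 T) := by
      have h2 := intervalIntegral.continuousOn_primitive_interval (μ := volume) hint
      rw [huIcc] at h2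
      exact continuousOn_const.add h2
    exact hprim.congr fun t ht => huac t ht
  have hAcont : ∀ v w : V, ContinuousOn (fun t => A t v w) (Set.Icc 0 T) := by
    intro v w
    have hint : IntegrableOn (fun t => A' t v w) (Set.uIcc 0 T) volume := by
      rw [huIcc, integrableOn_Icc_iff_integrableOn_Ioc]
      exact (hA'int v w).1
    have hprim : ContinuousOn (fun t => A 0 v w + ∫ s in (0:ℝ)..t, A' s v w)
        (Set.Icc 0 T) := by
      have h2 := intervalIntegral.continuousOn_primitive_interval (μ := volume) hint
      rw [huIcc] at h2
      exact continuousOn_const.add h2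
    exact hprim.congr fun t ht => hAac v w t ht
  obtain ⟨M₀, hM₀⟩ := isCompact_Icc.exists_bound_of_continuousOn hucont
  set M : ℝ := max M₀ 0 with hMdef
  have hM : ∀ t ∈ Set.Icc (0:ℝ) T, ‖u t‖ ≤ M := fun t ht => (hM₀ t ht).trans (le_max_left _ _)
  have hM0 : (0:ℝ) ≤ M := le_max_right _ _
  have hCA0 : 0 ≤ CA := le_trans (norm_nonneg (A 0)) (hAbdd 0 h0T)
  have hCA'0 : 0 ≤ CA' := le_trans (norm_nonneg (A' 0)) (hA'bdd 0 h0T)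
  -- measurability building blocks
  have hu_aesm : ∀ (c d : ℝ), c ∈ Set.Icc (0:ℝ) T → d ∈ Set.Icc (0:ℝ) T →
      AEStronglyMeasurable u (volume.restrict (Set.Ioc c d)) := by
    intro c d hc hd
    have hss : Set.Ioc c d ⊆ Set.Icc 0 T :=
      fun x hx => ⟨hc.1.trans hx.1.le, hx.2.trans hd.2⟩
    exact (hucont.mono hss).aestronglyMeasurable measurableSet_Ioc
  have hu'_aesm : ∀ (c d : ℝ), c ∈ Set.Icc (0:ℝ) T → d ∈ Set.Icc (0:ℝ) T →
      AEStronglyMeasurable u' (volume.restrict (Set.Ioc c d)) :=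
    fun c d hc hd => (hu'sub c d hc hd).1.aestronglyMeasurable
  have hA_aesm : ∀ (v w : V) (c d : ℝ), c ∈ Set.Icc (0:ℝ) T → d ∈ Set.Icc (0:ℝ) T →
      AEStronglyMeasurable (fun t => A t v w) (volume.restrict (Set.Ioc c d)) := by
    intro v w c d hc hd
    have hss : Set.Ioc c d ⊆ Set.Icc 0 T :=
      fun x hx => ⟨hc.1.trans hx.1.le, hx.2.trans hd.2⟩
    exact ((hAcont v w).mono hss).aestronglyMeasurable measurableSet_Ioc
  have hA'_aesm : ∀ (v w : V) (c d : ℝ), c ∈ Set.Icc (0:ℝ) T → d ∈ Set.Icc (0:ℝ) T →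
      AEStronglyMeasurable (fun t => A' t v w) (volume.restrict (Set.Ioc c d)) :=
    fun v w c d hc hd => (hA'sub v w c d hc hd).1.aestronglyMeasurable
  -- integrability helpers
  have sInt : ∀ {c d : ℝ}, c ≤ d → ∀ (f : ℝ → ℝ) (g : ℝ → ℝ),
      AEStronglyMeasurable f (volume.restrict (Set.Ioc c d)) →
      Integrable g (volume.restrict (Set.Ioc c d)) →
      (∀ t ∈ Set.Ioc c d, ‖f t‖ ≤ g t) →
      IntervalIntegrable f volume c d := by
    intro c d hcd f g hf hg hbound
    rw [intervalIntegrable_iff, Set.uIoc_of_le hcd]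
    refine Integrable.mono' hg hf ?_
    filter_upwards [ae_restrict_mem measurableSet_Ioc] with t ht
    exact hbound t ht
  have pInt : ∀ {c d : ℝ} (f : ℝ × ℝ → ℝ) (g : ℝ × ℝ → ℝ),
      AEStronglyMeasurable f
        ((volume.restrict (Set.Ioc c d)).prod (volume.restrict (Set.Ioc c d))) →
      Integrable g ((volume.restrict (Set.Ioc c d)).prod (volume.restrict (Set.Ioc c d))) →
      (∀ p : ℝ × ℝ, p.1 ∈ Set.Ioc c d → p.2 ∈ Set.Ioc c d → ‖f p‖ ≤ g p) →
      Integrable f ((volume.restrict (Set.Ioc c d)).prod (volume.restrict (Set.Ioc c d))) := by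
    intro c d f g hf hg hbound
    refine hg.mono' hf ?_
    have hmem : ∀ᵐ p ∂((volume.restrict (Set.Ioc c d)).prod (volume.restrict (Set.Ioc c d))),
        p.1 ∈ Set.Ioc c d ∧ p.2 ∈ Set.Ioc c d := by
      rw [Measure.prod_restrict]
      filter_upwards [ae_restrict_mem (measurableSet_Ioc.prod measurableSet_Ioc)] with p hp
      exact ⟨hp.1, hp.2⟩
    filter_upwards [hmem] with p hp
    exact hbound p hp.1 hp.2
  have bnd : ∀ (B : V →L[ℝ] V →L[ℝ] ℝ) (CB : ℝ) (v w : V) (cv cw : ℝ),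
      ‖B‖ ≤ CB → ‖v‖ ≤ cv → ‖w‖ ≤ cw → ‖B v w‖ ≤ CB * cv * cw := by
    intro B CB v w cv cw hB hv hw
    have h1 : ‖B v w‖ ≤ ‖B‖ * ‖v‖ * ‖w‖ := B.le_opNorm₂ v w
    have h2 : (0:ℝ) ≤ ‖B‖ := ContinuousLinearMap.opNorm_nonneg B
    exact h1.trans (mul_le_mul (mul_le_mul hB hv (norm_nonneg v) (h2.trans hB)) hw
      (norm_nonneg w) (mul_nonneg (h2.trans hB) ((norm_nonneg v).trans hv)))
  haveI hfinI : IsFiniteMeasure (volume.restrict (Set.Ioc a b)) :=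
    ⟨by rw [Measure.restrict_apply_univ]; exact measure_Ioc_lt_top⟩
  have iun : Integrable (fun t => ‖u' t‖) (volume.restrict (Set.Ioc a b)) :=
    (hu'sub a b haT hbT').1.norm
  -- concrete measurability facts
  have msc1 : AEStronglyMeasurable (fun t => A' t (u t) (u t)) (volume.restrict (Set.Ioc a b)) :=
    aesm_bilin_apply A' u u (fun v w => hA'_aesm v w a b haT hbT')
      (hu_aesm a b haT hbT') (hu_aesm a b haT hbT')
  have msc2 : AEStronglyMeasurable (fun t => A t (u t) (u' t)) (volume.restrict (Set.Ioc a b)) :=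
    aesm_bilin_apply A u u' (fun v w => hA_aesm v w a b haT hbT')
      (hu_aesm a b haT hbT') (hu'_aesm a b haT hbT')
  have msc3 : AEStronglyMeasurable (fun t => A a (u t) (u' t)) (volume.restrict (Set.Ioc a b)) :=
    aesm_bilin_apply (fun _ => A a) u u' (fun v w => aestronglyMeasurable_const)
      (hu_aesm a b haT hbT') (hu'_aesm a b haT hbT')
  have msc4 : AEStronglyMeasurable (fun t => A a (u a) (u' t)) (volume.restrict (Set.Ioc a b)) :=
    aesm_bilin_apply (fun _ => A a) (fun _ => u a) u' (fun v w => aestronglyMeasurable_const)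
      aestronglyMeasurable_const (hu'_aesm a b haT hbT')
  have msc6 : AEStronglyMeasurable (fun s => A a (u' s) (u b)) (volume.restrict (Set.Ioc a b)) :=
    aesm_bilin_apply (fun _ => A a) u' (fun _ => u b) (fun v w => aestronglyMeasurable_const)
      (hu'_aesm a b haT hbT') aestronglyMeasurable_const
  have msc6' : AEStronglyMeasurable (fun s => A a (u' s) (u s)) (volume.restrict (Set.Ioc a b)) :=
    aesm_bilin_apply (fun _ => A a) u' u (fun v w => aestronglyMeasurable_const)
      (hu'_aesm a b haT hbT') (hu_aesm a b haT hbT')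
  have mscG1 : AEStronglyMeasurable
      (fun r => A r (u b - u r) (u' r) - A a (u b - u r) (u' r))
      (volume.restrict (Set.Ioc a b)) := by
    refine AEStronglyMeasurable.sub ?_ ?_
    · exact aesm_bilin_apply A (fun r => u b - u r) u' (fun v w => hA_aesm v w a b haT hbT')
        (aestronglyMeasurable_const.sub (hu_aesm a b haT hbT')) (hu'_aesm a b haT hbT')
    · exact aesm_bilin_apply (fun _ => A a) (fun r => u b - u r) u'
        (fun v w => aestronglyMeasurable_const)
        (aestronglyMeasurable_const.sub (hu_aesm a b haT hbT')) (hu'_aesm a b haT hbT')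
  -- interval integrability facts
  have if₁ : IntervalIntegrable (fun t => A' t (u t) (u t)) volume a b := by
    refine sInt habl _ (fun _ => CA' * M * M) msc1 (integrable_const _) ?_
    intro t ht
    have htT := hsubO ht
    exact bnd (A' t) CA' (u t) (u t) M M (hA'bdd t htT) (hM t htT) (hM t htT)
  have if₂ : IntervalIntegrable (fun t => A t (u t) (u' t)) volume a b := by
    refine sInt habl _ (fun t => CA * M * ‖u' t‖) msc2 (iun.const_mul (CA * M)) ?_
    intro t ht
    have htT := hsubO ht
    exact bnd (A t) CA (u t) (u' t) M ‖u' t‖ (hAbdd t htT) (hM t htT) (le_refl _)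
  have if₃ : IntervalIntegrable (fun t => A a (u t) (u' t)) volume a b := by
    refine sInt habl _ (fun t => CA * M * ‖u' t‖) msc3 (iun.const_mul (CA * M)) ?_
    intro t ht
    have htT := hsubO ht
    exact bnd (A a) CA (u t) (u' t) M ‖u' t‖ (hAbdd a haT) (hM t htT) (le_refl _)
  have if₄ : IntervalIntegrable (fun t => A a (u a) (u' t)) volume a b := by
    refine sInt habl _ (fun t => CA * M * ‖u' t‖) msc4 (iun.const_mul (CA * M)) ?_
    intro t ht
    exact bnd (A a) CA (u a) (u' t) M ‖u' t‖ (hAbdd a haT) (hM a haT) (le_refl _)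
  have if₅ : IntervalIntegrable (fun s => A' s (u b) (u b)) volume a b :=
    hA'sub (u b) (u b) a b haT hbT'
  have if₆ : IntervalIntegrable (fun s => A a (u' s) (u b)) volume a b := by
    refine sInt habl _ (fun s => CA * ‖u' s‖ * M) msc6 ((iun.const_mul CA).mul_const M) ?_
    intro s hs
    exact bnd (A a) CA (u' s) (u b) ‖u' s‖ M (hAbdd a haT) (le_refl _) (hM b hbT')
  have if₆' : IntervalIntegrable (fun s => A a (u' s) (u s)) volume a b := by
    refine sInt habl _ (fun s => CA * ‖u' s‖ * M) msc6' ((iun.const_mul CA).mul_const M) ?_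
    intro s hs
    exact bnd (A a) CA (u' s) (u s) ‖u' s‖ M (hAbdd a haT) (le_refl _) (hM s (hsubO hs))
  have ifG₁ : IntervalIntegrable
      (fun r => A r (u b - u r) (u' r) - A a (u b - u r) (u' r)) volume a b := by
    refine sInt habl _ (fun r => CA * (M + M) * ‖u' r‖ + CA * (M + M) * ‖u' r‖) mscG1
      ((iun.const_mul (CA * (M + M))).add (iun.const_mul (CA * (M + M)))) ?_
    intro r hr
    have hrT := hsubO hr
    have hsubnorm : ‖u b - u r‖ ≤ M + M :=
      (norm_sub_le (u b) (u r)).trans (add_le_add (hM b hbT') (hM r hrT))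
    have b1 := bnd (A r) CA (u b - u r) (u' r) (M + M) ‖u' r‖ (hAbdd r hrT) hsubnorm (le_refl _)
    have b2 := bnd (A a) CA (u b - u r) (u' r) (M + M) ‖u' r‖ (hAbdd a haT) hsubnorm (le_refl _)
    calc ‖A r (u b - u r) (u' r) - A a (u b - u r) (u' r)‖
        ≤ ‖A r (u b - u r) (u' r)‖ + ‖A a (u b - u r) (u' r)‖ := norm_sub_le _ _
      _ ≤ CA * (M + M) * ‖u' r‖ + CA * (M + M) * ‖u' r‖ := add_le_add b1 b2
  -- product integrability facts
  have msP1 : AEStronglyMeasurable (fun p : ℝ × ℝ => A a (u' p.1) (u' p.2))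
      ((volume.restrict (Set.Ioc a b)).prod (volume.restrict (Set.Ioc a b))) :=
    aesm_bilin_apply (fun _ : ℝ × ℝ => A a) (fun p => u' p.1) (fun p => u' p.2)
      (fun v w => aestronglyMeasurable_const)
      ((hu'_aesm a b haT hbT').comp_fst) ((hu'_aesm a b haT hbT').comp_snd)
  have ip1 : Integrable (fun p : ℝ × ℝ => A a (u' p.1) (u' p.2))
      ((volume.restrict (Set.Ioc a b)).prod (volume.restrict (Set.Ioc a b))) := by
    refine pInt _ (fun p => CA * ‖u' p.1‖ * ‖u' p.2‖) msP1 ((iun.const_mul CA).mul_prod iun) ?_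
    intro p h1 h2
    exact bnd (A a) CA (u' p.1) (u' p.2) ‖u' p.1‖ ‖u' p.2‖ (hAbdd a haT) (le_refl _) (le_refl _)
  have ip2 : Integrable (fun p : ℝ × ℝ => A' p.1 (u' p.2) (u b) + A' p.1 (u p.1) (u' p.2))
      ((volume.restrict (Set.Ioc a b)).prod (volume.restrict (Set.Ioc a b))) := by
    refine pInt _ (fun p => (2 * (CA' * M)) * ‖u' p.2‖) ?_
      ((integrable_const _).mul_prod iun) ?_
    · refine AEStronglyMeasurable.add ?_ ?_
      · exact aesm_bilin_apply (fun p : ℝ × ℝ => A' p.1) (fun p => u' p.2) (fun _ => u b)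
          (fun v w => (hA'_aesm v w a b haT hbT').comp_fst)
          ((hu'_aesm a b haT hbT').comp_snd) aestronglyMeasurable_const
      · exact aesm_bilin_apply (fun p : ℝ × ℝ => A' p.1) (fun p => u p.1) (fun p => u' p.2)
          (fun v w => (hA'_aesm v w a b haT hbT').comp_fst)
          ((hu_aesm a b haT hbT').comp_fst) ((hu'_aesm a b haT hbT').comp_snd)
    · intro p h1 h2
      have h1T := hsubO h1
      have b1 := bnd (A' p.1) CA' (u' p.2) (u b) ‖u' p.2‖ M (hA'bdd p.1 h1T) (le_refl _)
        (hM b hbT')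
      have b2 := bnd (A' p.1) CA' (u p.1) (u' p.2) M ‖u' p.2‖ (hA'bdd p.1 h1T) (hM p.1 h1T)
        (le_refl _)
      calc ‖A' p.1 (u' p.2) (u b) + A' p.1 (u p.1) (u' p.2)‖
          ≤ ‖A' p.1 (u' p.2) (u b)‖ + ‖A' p.1 (u p.1) (u' p.2)‖ := norm_add_le _ _
        _ ≤ CA' * ‖u' p.2‖ * M + CA' * M * ‖u' p.2‖ := add_le_add b1 b2
        _ = (2 * (CA' * M)) * ‖u' p.2‖ := by ring
  have ip3 : Integrable (fun p : ℝ × ℝ => A p.1 (u' p.1) (u' p.2) - A a (u' p.1) (u' p.2))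
      ((volume.restrict (Set.Ioc a b)).prod (volume.restrict (Set.Ioc a b))) := by
    refine pInt _ (fun p => (2 * CA) * ‖u' p.1‖ * ‖u' p.2‖) ?_
      ((iun.const_mul (2 * CA)).mul_prod iun) ?_
    · refine AEStronglyMeasurable.sub ?_ msP1
      exact aesm_bilin_apply (fun p : ℝ × ℝ => A p.1) (fun p => u' p.1) (fun p => u' p.2)
        (fun v w => (hA_aesm v w a b haT hbT').comp_fst)
        ((hu'_aesm a b haT hbT').comp_fst) ((hu'_aesm a b haT hbT').comp_snd)
    · intro p h1 h2
      have h1T := hsubO h1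
      have b1 := bnd (A p.1) CA (u' p.1) (u' p.2) ‖u' p.1‖ ‖u' p.2‖ (hAbdd p.1 h1T)
        (le_refl _) (le_refl _)
      have b2 := bnd (A a) CA (u' p.1) (u' p.2) ‖u' p.1‖ ‖u' p.2‖ (hAbdd a haT)
        (le_refl _) (le_refl _)
      calc ‖A p.1 (u' p.1) (u' p.2) - A a (u' p.1) (u' p.2)‖
          ≤ ‖A p.1 (u' p.1) (u' p.2)‖ + ‖A a (u' p.1) (u' p.2)‖ := norm_sub_le _ _
        _ ≤ CA * ‖u' p.1‖ * ‖u' p.2‖ + CA * ‖u' p.1‖ * ‖u' p.2‖ := add_le_add b1 b2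
        _ = (2 * CA) * ‖u' p.1‖ * ‖u' p.2‖ := by ring
  have ip4 : ∀ r ∈ Set.Icc a b, Integrable (fun p : ℝ × ℝ => A' p.1 (u' p.2) (u' r))
      ((volume.restrict (Set.Ioc a r)).prod (volume.restrict (Set.Ioc a r))) := by
    intro r hr
    have hrT : r ∈ Set.Icc (0:ℝ) T := hsub hr
    haveI : IsFiniteMeasure (volume.restrict (Set.Ioc a r)) :=
      ⟨by rw [Measure.restrict_apply_univ]; exact measure_Ioc_lt_top⟩
    have hsubOr : Set.Ioc a r ⊆ Set.Icc (0:ℝ) T :=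
      fun x hx => ⟨ha.trans hx.1.le, hx.2.trans hrT.2⟩
    refine pInt _ (fun p => (CA' * ‖u' r‖) * ‖u' p.2‖) ?_
      ((integrable_const _).mul_prod (hu'sub a r haT hrT).1.norm) ?_
    · exact aesm_bilin_apply (fun p : ℝ × ℝ => A' p.1) (fun p => u' p.2) (fun _ => u' r)
        (fun v w => (hA'_aesm v w a r haT hrT).comp_fst)
        ((hu'_aesm a r haT hrT).comp_snd) aestronglyMeasurable_const
    · intro p h1 h2
      have h1T := hsubOr h1
      calc ‖A' p.1 (u' p.2) (u' r)‖
          ≤ CA' * ‖u' p.2‖ * ‖u' r‖ := bnd (A' p.1) CA' (u' p.2) (u' r) ‖u' p.2‖ ‖u' r‖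
            (hA'bdd p.1 h1T) (le_refl _) (le_refl _)
        _ = (CA' * ‖u' r‖) * ‖u' p.2‖ := by ring
  -- Step B : 2 ∫ A a (u t)(u' t) = A a (u b)(u b) - A a (u a)(u a)
  have stepB : 2 * (∫ t in a..b, A a (u t) (u' t)) = A a (u b) (u b) - A a (u a) (u a) := by
    have e1 : (∫ t in a..b, (A a (u t) (u' t) - A a (u a) (u' t)))
        = (∫ t in a..b, A a (u t) (u' t)) - ∫ t in a..b, A a (u a) (u' t) :=
      intervalIntegral.integral_sub if₃ if₄
    have e2 : (∫ t in a..b, (A a (u t) (u' t) - A a (u a) (u' t)))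
        = ∫ t in a..b, (∫ s in a..t, A a (u' s) (u' t)) := by
      refine intervalIntegral.integral_congr fun t ht => ?_
      rw [Set.uIcc_of_le habl] at ht
      have htT : t ∈ Set.Icc (0:ℝ) T := hsub ht
      have h5 := pullUL ((A a).flip (u' t)) a t haT htT
      simp only [ContinuousLinearMap.flip_apply] at h5
      exact h5.symm
    have e3 : (∫ t in a..b, (∫ s in a..t, A a (u' s) (u' t)))
        = ∫ s in a..b, (∫ t in s..b, A a (u' s) (u' t)) :=
      tri_swap habl (fun s t => A a (u' s) (u' t)) ip1
    have e4 : (∫ s in a..b, (∫ t in s..b, A a (u' s) (u' t)))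
        = ∫ s in a..b, (A a (u' s) (u b) - A a (u' s) (u s)) := by
      refine intervalIntegral.integral_congr fun s hs => ?_
      rw [Set.uIcc_of_le habl] at hs
      have hsT : s ∈ Set.Icc (0:ℝ) T := hsub hs
      exact pullUL (A a (u' s)) s b hsT hbT'
    have e5 : (∫ s in a..b, (A a (u' s) (u b) - A a (u' s) (u s)))
        = (∫ s in a..b, A a (u' s) (u b)) - ∫ s in a..b, A a (u' s) (u s) :=
      intervalIntegral.integral_sub if₆ if₆'
    have e6 : (∫ s in a..b, A a (u' s) (u b)) = A a (u b) (u b) - A a (u a) (u b) := by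
      have h6 := pullUL ((A a).flip (u b)) a b haT hbT'
      simpa [ContinuousLinearMap.flip_apply] using h6
    have e7 : (∫ s in a..b, A a (u' s) (u s)) = ∫ s in a..b, A a (u s) (u' s) := by
      refine intervalIntegral.integral_congr fun s hs => ?_
      rw [Set.uIcc_of_le habl] at hs
      exact hAsymm a haT (u' s) (u s)
    have e8 : (∫ t in a..b, A a (u a) (u' t)) = A a (u a) (u b) - A a (u a) (u a) :=
      pullUL (A a (u a)) a b haT hbT'
    linarith [e1, e2, e3, e4, e5, e6, e7, e8]
  -- Goal 2
  have iK : IntervalIntegrable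
      (fun r => ∫ q in a..r, (A q (u' q) (u' r) - A a (u' q) (u' r))) volume a b :=
    tri_int habl (fun q r => A q (u' q) (u' r) - A a (u' q) (u' r)) ip3
  have goal2 : (∫ s in a..b, A' s (u b) (u b))
      = (∫ t in a..b, A' t (u t) (u t))
        + 2 * ((∫ t in a..b, A t (u t) (u' t)) - ∫ t in a..b, A a (u t) (u' t)) := by
    have c1 : (∫ s in a..b, (A' s (u b) (u b) - A' s (u s) (u s)))
        = (∫ s in a..b, A' s (u b) (u b)) - ∫ s in a..b, A' s (u s) (u s) :=
      intervalIntegral.integral_sub if₅ if₁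
    have c2 : (∫ s in a..b, (A' s (u b) (u b) - A' s (u s) (u s)))
        = ∫ s in a..b, (∫ r in s..b, (A' s (u' r) (u b) + A' s (u s) (u' r))) := by
      refine intervalIntegral.integral_congr fun s hs => ?_
      rw [Set.uIcc_of_le habl] at hs
      have hsT : s ∈ Set.Icc (0:ℝ) T := hsub hs
      have h5 := pullUL ((A' s).flip (u b) + A' s (u s)) s b hsT hbT'
      simp only [ContinuousLinearMap.add_apply, ContinuousLinearMap.flip_apply] at h5
      rw [h5]; ring
    have c3 : (∫ s in a..b, (∫ r in s..b, (A' s (u' r) (u b) + A' s (u s) (u' r))))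
        = ∫ r in a..b, (∫ s in a..r, (A' s (u' r) (u b) + A' s (u s) (u' r))) :=
      (tri_swap habl (fun s r => A' s (u' r) (u b) + A' s (u s) (u' r)) ip2).symm
    have c4 : ∀ r ∈ Set.Icc a b,
        (∫ s in a..r, (A' s (u' r) (u b) + A' s (u s) (u' r)))
          = 2 * (A r (u r) (u' r) - A a (u r) (u' r))
            + (A r (u b - u r) (u' r) - A a (u b - u r) (u' r))
            - (∫ q in a..r, (A q (u' q) (u' r) - A a (u' q) (u' r))) := by
      intro r hr
      have hrT : r ∈ Set.Icc (0:ℝ) T := hsub hr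
      have har : a ≤ r := hr.1
      have hsubOr : Set.Ioc a r ⊆ Set.Icc (0:ℝ) T :=
        fun x hx => ⟨ha.trans hx.1.le, hx.2.trans hrT.2⟩
      have mr : AEStronglyMeasurable (fun s => A' s (u s) (u' r))
          (volume.restrict (Set.Ioc a r)) :=
        aesm_bilin_apply A' u (fun _ => u' r) (fun v w => hA'_aesm v w a r haT hrT)
          (hu_aesm a r haT hrT) aestronglyMeasurable_const
      have ir2 : IntervalIntegrable (fun s => A' s (u s) (u' r)) volume a r := by
        refine sInt har _ (fun _ => CA' * M * ‖u' r‖) mr (integrable_const _) ?_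
        intro s hs
        exact bnd (A' s) CA' (u s) (u' r) M ‖u' r‖ (hA'bdd s (hsubOr hs)) (hM s (hsubOr hs))
          (le_refl _)
      have ir1 : IntervalIntegrable (fun s => A' s (u' r) (u b)) volume a r :=
        hA'sub (u' r) (u b) a r haT hrT
      have ir3 : IntervalIntegrable (fun s => A' s (u r) (u' r)) volume a r :=
        hA'sub (u r) (u' r) a r haT hrT
      have s1 : (∫ s in a..r, (A' s (u' r) (u b) + A' s (u s) (u' r)))
          = (∫ s in a..r, A' s (u' r) (u b)) + ∫ s in a..r, A' s (u s) (u' r) :=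
        intervalIntegral.integral_add ir1 ir2
      have s2 : (∫ s in a..r, A' s (u' r) (u b)) = A r (u' r) (u b) - A a (u' r) (u b) :=
        pullA a r haT hrT (u' r) (u b)
      have s3 : (∫ s in a..r, A' s (u s) (u' r))
          = (∫ s in a..r, A' s (u r) (u' r)) + ∫ s in a..r, A' s (u s - u r) (u' r) := by
        have e : (∫ s in a..r, A' s (u s) (u' r))
            = ∫ s in a..r, (A' s (u r) (u' r) + A' s (u s - u r) (u' r)) := by
          refine intervalIntegral.integral_congr fun s _ => ?_
          rw [map_sub]
          simp only [ContinuousLinearMap.sub_apply]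
          ring
        rw [e]
        refine intervalIntegral.integral_add ir3 ?_
        have e2 : (fun s : ℝ => A' s (u s - u r) (u' r))
            = fun s => A' s (u s) (u' r) - A' s (u r) (u' r) := by
          funext s
          rw [map_sub]
          simp only [ContinuousLinearMap.sub_apply]
        rw [e2]
        exact ir2.sub ir3
      have s4 : (∫ s in a..r, A' s (u r) (u' r)) = A r (u r) (u' r) - A a (u r) (u' r) :=
        pullA a r haT hrT (u r) (u' r)
      have s5 : (∫ s in a..r, A' s (u s - u r) (u' r))
          = -(∫ q in a..r, (A q (u' q) (u' r) - A a (u' q) (u' r))) := by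
        have t1 : (∫ s in a..r, A' s (u s - u r) (u' r))
            = ∫ s in a..r, (-(∫ q in s..r, A' s (u' q) (u' r))) := by
          refine intervalIntegral.integral_congr fun s hs => ?_
          rw [Set.uIcc_of_le har] at hs
          have hsT : s ∈ Set.Icc (0:ℝ) T := ⟨ha.trans hs.1, hs.2.trans hrT.2⟩
          have h5 := pullUL ((A' s).flip (u' r)) s r hsT hrT
          simp only [ContinuousLinearMap.flip_apply] at h5
          rw [map_sub]
          simp only [ContinuousLinearMap.sub_apply]
          linarith [h5]
        rw [t1, intervalIntegral.integral_neg]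
        congr 1
        have t2 : (∫ s in a..r, (∫ q in s..r, A' s (u' q) (u' r)))
            = ∫ q in a..r, (∫ s in a..q, A' s (u' q) (u' r)) :=
          (tri_swap har (fun s q => A' s (u' q) (u' r)) (ip4 r hr)).symm
        rw [t2]
        refine intervalIntegral.integral_congr fun q hq => ?_
        rw [Set.uIcc_of_le har] at hq
        have hqT : q ∈ Set.Icc (0:ℝ) T := ⟨ha.trans hq.1, hq.2.trans hrT.2⟩
        exact pullA a q haT hqT (u' q) (u' r)
      have s6 : A r (u' r) (u b) - A a (u' r) (u b) = A r (u b) (u' r) - A a (u b) (u' r) := by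
        rw [hAsymm r hrT (u' r) (u b), hAsymm a haT (u' r) (u b)]
      have alg : A r (u b) (u' r) - A a (u b) (u' r)
          = (A r (u b - u r) (u' r) - A a (u b - u r) (u' r))
            + (A r (u r) (u' r) - A a (u r) (u' r)) := by
        rw [map_sub, map_sub]
        simp only [ContinuousLinearMap.sub_apply]
        ring
      rw [s1, s2, s3, s4, s5, s6]
      linarith [alg]
    have c4' : (∫ r in a..b, (∫ s in a..r, (A' s (u' r) (u b) + A' s (u s) (u' r))))
        = ∫ r in a..b, (2 * (A r (u r) (u' r) - A a (u r) (u' r))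
            + (A r (u b - u r) (u' r) - A a (u b - u r) (u' r))
            - (∫ q in a..r, (A q (u' q) (u' r) - A a (u' q) (u' r)))) := by
      refine intervalIntegral.integral_congr fun r hr => ?_
      rw [Set.uIcc_of_le habl] at hr
      exact c4 r hr
    have i1 : IntervalIntegrable (fun r => 2 * (A r (u r) (u' r) - A a (u r) (u' r)))
        volume a b := (if₂.sub if₃).const_mul 2
    have c5 : (∫ r in a..b, (2 * (A r (u r) (u' r) - A a (u r) (u' r))
            + (A r (u b - u r) (u' r) - A a (u b - u r) (u' r))
            - (∫ q in a..r, (A q (u' q) (u' r) - A a (u' q) (u' r)))))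
        = 2 * ((∫ t in a..b, A t (u t) (u' t)) - (∫ t in a..b, A a (u t) (u' t)))
          + (∫ r in a..b, (A r (u b - u r) (u' r) - A a (u b - u r) (u' r)))
          - (∫ r in a..b, (∫ q in a..r, (A q (u' q) (u' r) - A a (u' q) (u' r)))) := by
      rw [intervalIntegral.integral_sub (i1.add ifG₁) iK,
        intervalIntegral.integral_add i1 ifG₁,
        intervalIntegral.integral_const_mul,
        intervalIntegral.integral_sub if₂ if₃]
    have c6 : (∫ r in a..b, (A r (u b - u r) (u' r) - A a (u b - u r) (u' r)))
        = ∫ q in a..b, (∫ r in a..q, (A r (u' r) (u' q) - A a (u' r) (u' q))) := by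
      have d1 : (∫ r in a..b, (A r (u b - u r) (u' r) - A a (u b - u r) (u' r)))
          = ∫ r in a..b, (∫ q in r..b, (A r (u' r) (u' q) - A a (u' r) (u' q))) := by
        refine intervalIntegral.integral_congr fun r hr => ?_
        rw [Set.uIcc_of_le habl] at hr
        have hrT : r ∈ Set.Icc (0:ℝ) T := hsub hr
        have h5 := pullUL (A r (u' r) - A a (u' r)) r b hrT hbT'
        simp only [ContinuousLinearMap.sub_apply] at h5
        rw [hAsymm r hrT (u b - u r) (u' r), hAsymm a haT (u b - u r) (u' r),
          map_sub, map_sub]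
        rw [h5]; ring
      rw [d1]
      exact (tri_swap habl (fun r q => A r (u' r) (u' q) - A a (u' r) (u' q)) ip3).symm
    linarith [c1, c2, c3, c4', c5, c6]
  -- final assembly
  rw [intervalIntegral.integral_add if₁ (if₂.const_mul 2),
    intervalIntegral.integral_const_mul]
  have final3 : (∫ s in a..b, A' s (u b) (u b)) = A b (u b) (u b) - A a (u b) (u b) :=
    pullA a b haT hbT' (u b) (u b)
  linarith [goal2, stepB, final3]
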